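/- Let F be a finite field of characteristic 2 and let N be a positive integer. Let Sp_{2N}(F) denote the symplectic group of 2N×2N matrices over F, acting on the space of row vectors F^{2N} by right multiplication. Then for every nonzero vector x ∈ F^{2N}, a vector y ∈ F^{2N} is fixed by every element of the stabilizer of x in Sp_{2N}(F) if and only if y lies in the one-dimensional subspace F·x; that is, the set of common fixed points of the stabilizer of x in Sp_{2N}(F) equals F·x. -/

import Mathlib

open Matrix

section Helpers

variable {n : Type*} [Fintype n] [DecidableEq n] {F : Type*} [Field F]

private lemma vecMulVec_mul_mat (a v : n → F) (B : Matrix n n F) :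
    vecMulVec a v * B = vecMulVec a (vecMul v B) := by
  ext i j
  simp [mul_apply, vecMulVec_apply, vecMul, dotProduct, Finset.mul_sum, mul_assoc]

private lemma mat_mul_vecMulVec (a v : n → F) (B : Matrix n n F) :
    B * vecMulVec a v = vecMulVec (B *ᵥ a) v := by
  ext i j
  simp [mul_apply, vecMulVec_apply, mulVec, dotProduct, Finset.sum_mul, mul_assoc]

private lemma vecMulVec_transpose (a v : n → F) :
    (vecMulVec a v)ᵀ = vecMulVec v a := by
  ext i j
  simp [vecMulVec_apply, mul_comm]

private lemma vecMul_vecMulVec (x a v : n → F) :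
    vecMul x (vecMulVec a v) = (x ⬝ᵥ a) • v := by
  ext j
  simp [vecMul, vecMulVec_apply, dotProduct, Finset.sum_mul, mul_assoc]

/-- Elementary linear algebra: if the dual functional of `y'` vanishes on the kernel of the
dual functional of `x' ≠ 0`, then `y'` is a multiple of `x'`. -/
private lemma line_of_dual (x' y' : n → F) (hx : x' ≠ 0)
    (h : ∀ v : n → F, x' ⬝ᵥ v = 0 → y' ⬝ᵥ v = 0) : ∃ c : F, y' = c • x' := by
  obtain ⟨i, hi⟩ : ∃ i, x' i ≠ 0 := by
    by_contra hc
    push_neg at hc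
    exact hx (funext fun i => hc i)
  refine ⟨y' i / x' i, funext fun j => ?_⟩
  set v : n → F := x' i • (Pi.single j 1 : n → F) - x' j • (Pi.single i 1 : n → F) with hvdef
  have hv : x' ⬝ᵥ v = 0 := by
    rw [hvdef, dotProduct_sub, dotProduct_smul, dotProduct_smul, dotProduct_single,
      dotProduct_single]
    simp only [smul_eq_mul, mul_one]
    ring
  have hthis := h _ hv
  rw [hvdef, dotProduct_sub, dotProduct_smul, dotProduct_smul, dotProduct_single,
    dotProduct_single] at hthis
  simp only [smul_eq_mul, mul_one] at hthis
  have hkey : x' i * y' j = x' j * y' i := by linear_combination hthis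
  have : y' j = y' i / x' i * x' j := by
    field_simp
    linear_combination hkey
  simpa [Pi.smul_apply, smul_eq_mul] using this

end Helpers

section Transvection

variable {N : ℕ} {F : Type*} [Field F]

private lemma J_mulVec_dot (v : (Fin N ⊕ Fin N) → F) :
    ((Matrix.J (Fin N) F) *ᵥ v) ⬝ᵥ v = 0 := by
  simp only [Matrix.J, dotProduct, mulVec, Fintype.sum_sum_type,
    Matrix.fromBlocks_apply₁₁, Matrix.fromBlocks_apply₁₂, Matrix.fromBlocks_apply₂₁,
    Matrix.fromBlocks_apply₂₂, Matrix.zero_apply, Matrix.neg_apply, Matrix.one_apply]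
  simp only [zero_mul, Finset.sum_const_zero, zero_add, add_zero, neg_mul, ite_mul, one_mul,
    Finset.sum_ite_eq, Finset.mem_univ, if_true, Finset.sum_neg_distrib]
  simp [mul_comm]

/-- The symplectic mytransvection `u ↦ u + ⟨u, v⟩ v` as a matrix. -/
private def mytransvection (v : (Fin N ⊕ Fin N) → F) : Matrix (Fin N ⊕ Fin N) (Fin N ⊕ Fin N) F :=
  1 + vecMulVec ((Matrix.J (Fin N) F) *ᵥ v) v

private lemma mytransvection_mem (v : (Fin N ⊕ Fin N) → F) :
    mytransvection v ∈ Matrix.symplecticGroup (Fin N) F := by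
  show mytransvection v * Matrix.J (Fin N) F * (mytransvection v)ᵀ = Matrix.J (Fin N) F
  set J := Matrix.J (Fin N) F with hJ
  set a := J *ᵥ v with ha
  have hvJ : vecMul v J = -a := by
    have : vecMul v J = Jᵀ *ᵥ v := by rw [← Matrix.mulVec_transpose]
    rw [this, Matrix.J_transpose, Matrix.neg_mulVec, ha]
  have hMJ : vecMulVec a v * J = vecMulVec a (-a) := by
    rw [vecMulVec_mul_mat, hvJ]
  have hJMt : J * (vecMulVec a v)ᵀ = vecMulVec a a := by
    rw [vecMulVec_transpose, mat_mul_vecMulVec, ← ha]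
  have hav : a ⬝ᵥ v = 0 := J_mulVec_dot v
  have hMJMt : vecMulVec a v * J * (vecMulVec a v)ᵀ = 0 := by
    rw [hMJ, vecMulVec_transpose, vecMulVec_mul_mat, _root_.vecMul_vecMulVec]
    have : (-a) ⬝ᵥ v = 0 := by simp [hav]
    rw [this]
    ext i j
    simp [vecMulVec_apply]
  have hneg : vecMulVec a (-a) = -vecMulVec a a := by
    ext i j; simp [vecMulVec_apply]
  unfold mytransvection
  rw [← hJ, ← ha]
  have expand : (1 + vecMulVec a v) * J * (1 + vecMulVec a v)ᵀ
      = J + vecMulVec a v * J + J * (vecMulVec a v)ᵀ + vecMulVec a v * J * (vecMulVec a v)ᵀ := by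
    rw [Matrix.transpose_add, Matrix.transpose_one]
    noncomm_ring
  rw [expand, hJMt, hMJMt, hMJ, hneg]
  abel

private lemma vecMul_mytransvection (x v : (Fin N ⊕ Fin N) → F) :
    vecMul x (mytransvection v) = x + (x ⬝ᵥ ((Matrix.J (Fin N) F) *ᵥ v)) • v := by
  unfold mytransvection
  rw [Matrix.vecMul_add, Matrix.vecMul_one, _root_.vecMul_vecMulVec]

end Transvection

/-- For a finite field `F` of characteristic 2 and a nonzero row vector `x ∈ F^{2N}`, the
common fixed points of the stabilizer of `x` in the symplectic group `Sp_{2N}(F)` (acting on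
row vectors by right multiplication) form exactly the line `F·x`. -/
theorem symplectic_stabilizer_fixed_points
    (F : Type*) [Field F] [Fintype F] [CharP F 2] (N : ℕ) (hN : 0 < N)
    (x : (Fin N ⊕ Fin N) → F) (hx : x ≠ 0) (y : (Fin N ⊕ Fin N) → F) :
    (∀ g ∈ Matrix.symplecticGroup (Fin N) F,
        Matrix.vecMul x g = x → Matrix.vecMul y g = y) ↔
      ∃ c : F, y = c • x := by
  constructor
  · intro h
    set J := Matrix.J (Fin N) F with hJ
    -- For every v orthogonal to x, the mytransvection along v fixes x, hence fixes y.
    have key : ∀ v : (Fin N ⊕ Fin N) → F, x ⬝ᵥ (J *ᵥ v) = 0 → y ⬝ᵥ (J *ᵥ v) = 0 := by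
      intro v hv
      have hfix : vecMul x (mytransvection v) = x := by
        rw [vecMul_mytransvection, ← hJ, hv, zero_smul, add_zero]
      have hy := h _ (mytransvection_mem v) hfix
      rw [vecMul_mytransvection, ← hJ] at hy
      have hsmul : (y ⬝ᵥ (J *ᵥ v)) • v = 0 := by
        have := hy
        rwa [add_eq_left] at this
      rcases smul_eq_zero.mp hsmul with h0 | h0
      · exact h0
      · simp [h0]
    -- Translate to dual functionals via `x' = x·J`, `y' = y·J`.
    have hJJ : ∀ z : (Fin N ⊕ Fin N) → F, vecMul (vecMul z J) J = -z := by
      intro z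
      rw [Matrix.vecMul_vecMul, hJ, Matrix.J_squared, Matrix.vecMul_neg, Matrix.vecMul_one]
    have hx' : vecMul x J ≠ 0 := by
      intro h0
      apply hx
      have := hJJ x
      rw [h0] at this
      simpa using this.symm
    have hdual : ∀ v : (Fin N ⊕ Fin N) → F, (vecMul x J) ⬝ᵥ v = 0 → (vecMul y J) ⬝ᵥ v = 0 := by
      intro v hv
      rw [← Matrix.dotProduct_mulVec] at hv ⊢
      exact key v hv
    obtain ⟨c, hc⟩ := line_of_dual (vecMul x J) (vecMul y J) hx' hdual
    refine ⟨c, ?_⟩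
    have := congrArg (fun z => vecMul z J) hc
    rw [hJJ, Matrix.smul_vecMul, hJJ] at this
    simpa using this
  · rintro ⟨c, rfl⟩ g _ hg
    rw [Matrix.smul_vecMul, hg]
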